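/- Let c be a real number with 0 < c < 1. Then lim_{N→∞} (1/N) ∑_{k=1}^{⌊cN⌋} log(2 sin(kπ/N)) = (1/π) ∫_0^{cπ} log(2 sin t) dt. -/

import Mathlib

open Filter MeasureTheory Set Topology intervalIntegral

private lemma integrableOn_log01 : IntegrableOn Real.log (Set.Ioc (0:ℝ) 1) := by
  have h := intervalIntegral.integrableOn_deriv_of_nonneg (g := fun x => x - x * Real.log x)
      (g' := fun x => -Real.log x) (a := 0) (b := 1)
      ((continuous_id.sub Real.continuous_mul_log).continuousOn)
      (fun x hx => by
        have h1 := Real.hasDerivAt_mul_log (x := x) (ne_of_gt hx.1)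
        have h2 := (hasDerivAt_id x).sub h1
        exact h2.congr_deriv (by ring))
      (fun x hx => by
        rw [neg_nonneg]
        exact Real.log_nonpos hx.1.le hx.2.le)
  have h2 : IntegrableOn (fun x => -(-Real.log x)) (Set.Ioc (0:ℝ) 1) := h.neg
  simpa using h2

private lemma floorTendsto (c : ℝ) (hc : 0 ≤ c) :
    Tendsto (fun N : ℕ => (⌊c * N⌋₊ : ℝ) / N) atTop (𝓝 c) := by
  have h1 : Tendsto (fun N : ℕ => c - 1 / (N : ℝ)) atTop (𝓝 c) := by
    simpa using tendsto_const_nhds.sub (tendsto_one_div_atTop_nhds_zero_nat (𝕜 := ℝ))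
  refine tendsto_of_tendsto_of_tendsto_of_le_of_le' h1 tendsto_const_nhds ?_ ?_
  · filter_upwards [eventually_ge_atTop 1] with N hN
    have hN' : (0:ℝ) < N := by exact_mod_cast hN
    rw [sub_le_iff_le_add, ← add_div, le_div_iff₀ hN']
    have := (Nat.lt_floor_add_one (c * N)).le
    linarith
  · filter_upwards [eventually_ge_atTop 1] with N hN
    have hN' : (0:ℝ) < N := by exact_mod_cast hN
    rw [div_le_iff₀ hN']
    exact Nat.floor_le (by positivity)

private lemma key_anti (f : ℝ → ℝ) (c d : ℝ) (hc : 0 < c) (hcd : c < d)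
    (hf : AntitoneOn f (Set.Ioc 0 d))
    (hint : IntegrableOn f (Set.Ioc 0 d)) :
    Tendsto (fun N : ℕ => (1 / (N : ℝ)) * ∑ k ∈ Finset.range ⌊c * N⌋₊, f (((k : ℝ) + 1) / N))
      atTop (𝓝 (∫ t in (0:ℝ)..c, f t)) := by
  have hd : 0 < d := hc.trans hcd
  have hsub : ∀ a b : ℝ, 0 ≤ a → b ≤ d → a ≤ b → IntervalIntegrable f volume a b := by
    intro a b ha hb hab
    rw [intervalIntegrable_iff_integrableOn_Ioc_of_le hab]
    exact hint.mono_set (Set.Ioc_subset_Ioc ha hb)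
  set F : ℝ → ℝ := fun x => ∫ t in (0:ℝ)..x, f t with hF
  have hFcont : ContinuousOn F (Set.Icc 0 d) := by
    have := intervalIntegral.continuousOn_primitive_interval'
      (hsub 0 d le_rfl le_rfl hd.le) (Set.left_mem_uIcc)
    rwa [Set.uIcc_of_le hd.le] at this
  have hFc : ContinuousAt F c := hFcont.continuousAt (Icc_mem_nhds hc hcd)
  have h1N : Tendsto (fun N : ℕ => 1 / (N:ℝ)) atTop (𝓝 0) := tendsto_one_div_atTop_nhds_zero_nat
  have hM : Tendsto (fun N : ℕ => (⌊c * N⌋₊ : ℝ) / N) atTop (𝓝 c) := floorTendsto c hc.le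
  have hM1 : Tendsto (fun N : ℕ => ((⌊c * N⌋₊ : ℝ) + 1) / N) atTop (𝓝 c) := by
    have := hM.add h1N
    simp only [add_zero] at this
    refine this.congr fun N => ?_
    rw [← add_div]
  have hbound : ∀ᶠ N : ℕ in atTop,
      F (((⌊c * N⌋₊ : ℝ) + 1) / N) - F (1 / N) ≤
        (1 / (N : ℝ)) * ∑ k ∈ Finset.range ⌊c * N⌋₊, f (((k : ℝ) + 1) / N) ∧
      (1 / (N : ℝ)) * ∑ k ∈ Finset.range ⌊c * N⌋₊, f (((k : ℝ) + 1) / N) ≤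
        F ((⌊c * N⌋₊ : ℝ) / N) := by
    filter_upwards [eventually_ge_atTop 1, h1N.eventually_lt_const (by linarith : (0:ℝ) < d - c)]
      with N hN1 hNd
    have hNpos : (0:ℝ) < N := by exact_mod_cast hN1
    set M := ⌊c * N⌋₊ with hMdef
    have hMle : (M : ℝ) ≤ c * N := Nat.floor_le (by positivity)
    have hMN : (M : ℝ) / N ≤ c := by rw [div_le_iff₀ hNpos]; linarith
    have hM1N : ((M : ℝ) + 1) / N ≤ d := by
      rw [div_le_iff₀ hNpos]
      have h2 : (1:ℝ)/N < d - c := hNd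
      rw [div_lt_iff₀ hNpos] at h2
      nlinarith
    have hmem : ∀ k : ℕ, k < M → ((k : ℝ) + 1) / N ∈ Set.Ioc (0:ℝ) d := by
      intro k hk
      refine ⟨by positivity, ?_⟩
      have : ((k:ℝ) + 1) ≤ M := by exact_mod_cast Nat.succ_le_of_lt hk
      calc ((k:ℝ)+1)/N ≤ (M:ℝ)/N := by gcongr
      _ ≤ c := hMN
      _ ≤ d := hcd.le
    constructor
    · -- lower bound
      have step : ∀ k ∈ Finset.range M,
          (∫ t in (((k:ℝ)+1)/N)..(((k:ℝ)+1+1)/N), f t) ≤ f (((k : ℝ) + 1) / N) * (1/N) := by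
        intro k hk
        rw [Finset.mem_range] at hk
        have hle : (((k:ℝ)+1)/N) ≤ (((k:ℝ)+1+1)/N) := by gcongr <;> linarith
        rw [intervalIntegral.integral_of_le hle]
        have hsubset : Set.Ioc (((k:ℝ)+1)/N) (((k:ℝ)+1+1)/N) ⊆ Set.Ioc 0 d := by
          apply Set.Ioc_subset_Ioc
          · positivity
          · have h3 : ((k:ℝ) + 1) ≤ M := by exact_mod_cast Nat.succ_le_of_lt hk
            calc ((k:ℝ)+1+1)/N ≤ ((M:ℝ)+1)/N := by gcongr
            _ ≤ d := hM1N
        have hmono : ∀ t ∈ Set.Ioc (((k:ℝ)+1)/N) (((k:ℝ)+1+1)/N), f t ≤ f (((k : ℝ) + 1) / N) :=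
          fun t ht => hf (hmem k hk) (hsubset ht) ht.1.le
        calc (∫ t in Set.Ioc (((k:ℝ)+1)/N) (((k:ℝ)+1+1)/N), f t)
            ≤ ∫ _ in Set.Ioc (((k:ℝ)+1)/N) (((k:ℝ)+1+1)/N), f (((k : ℝ) + 1) / N) := by
              apply setIntegral_mono_on (hint.mono_set hsubset)
                (integrableOn_const (by rw [Real.volume_Ioc]; exact ENNReal.ofReal_ne_top))
                measurableSet_Ioc hmono
        _ = f (((k : ℝ) + 1) / N) * (1/N) := by
              rw [setIntegral_const, measureReal_def, Real.volume_Ioc, smul_eq_mul,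
                ENNReal.toReal_ofReal (by linarith : (0:ℝ) ≤ ((k:ℝ)+1+1)/N - ((k:ℝ)+1)/N),
                ← sub_div]
              norm_num [mul_comm]
      have tele : ∑ k ∈ Finset.range M, (∫ t in (((k:ℝ)+1)/N)..(((k:ℝ)+1+1)/N), f t)
          = ∫ t in (1/(N:ℝ))..(((M:ℝ)+1)/N), f t := by
        have h := intervalIntegral.sum_integral_adjacent_intervals (μ := volume) (f := f)
          (a := fun k : ℕ => ((k:ℝ)+1)/N) (n := M) (fun k hk => by
            refine hsub _ _ (by positivity) ?_ (by push_cast; gcongr <;> linarith)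
            have h3 : ((k:ℝ) + 1) ≤ M := by exact_mod_cast Nat.succ_le_of_lt hk
            push_cast
            calc ((k:ℝ)+1+1)/N ≤ ((M:ℝ)+1)/N := by gcongr
            _ ≤ d := hM1N)
        push_cast at h
        convert h using 2 <;> norm_num
      have hadd : F (1/(N:ℝ)) + (∫ t in (1/(N:ℝ))..(((M:ℝ)+1)/N), f t) = F (((M:ℝ)+1)/N) := by
        apply intervalIntegral.integral_add_adjacent_intervals
        · exact hsub 0 (1/N) (by positivity) (by linarith) (by positivity)
        · refine hsub _ _ (by positivity) hM1N ?_
          gcongr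
          have h0 : (0:ℝ) ≤ (M:ℝ) := Nat.cast_nonneg M
          linarith
      calc F (((M:ℝ)+1)/N) - F (1/(N:ℝ)) = ∫ t in (1/(N:ℝ))..(((M:ℝ)+1)/N), f t := by
            rw [← hadd]; ring
      _ = ∑ k ∈ Finset.range M, (∫ t in (((k:ℝ)+1)/N)..(((k:ℝ)+1+1)/N), f t) := tele.symm
      _ ≤ ∑ k ∈ Finset.range M, f (((k : ℝ) + 1) / N) * (1/(N:ℝ)) := Finset.sum_le_sum step
      _ = (1 / (N : ℝ)) * ∑ k ∈ Finset.range M, f (((k : ℝ) + 1) / N) := by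
            rw [Finset.mul_sum]; simp [mul_comm]
    · -- upper bound
      have step : ∀ k ∈ Finset.range M,
          f (((k : ℝ) + 1) / N) * (1/N) ≤ (∫ t in ((k:ℝ)/N)..(((k:ℝ)+1)/N), f t) := by
        intro k hk
        rw [Finset.mem_range] at hk
        have hle : ((k:ℝ)/N) ≤ (((k:ℝ)+1)/N) := by gcongr <;> linarith
        rw [intervalIntegral.integral_of_le hle]
        have hsubset : Set.Ioc ((k:ℝ)/N) (((k:ℝ)+1)/N) ⊆ Set.Ioc 0 d := by
          apply Set.Ioc_subset_Ioc
          · positivity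
          · exact (hmem k hk).2
        have hmono : ∀ t ∈ Set.Ioc ((k:ℝ)/N) (((k:ℝ)+1)/N), f (((k : ℝ) + 1) / N) ≤ f t := by
          intro t ht
          exact hf (hsubset ht) (hmem k hk) ht.2
        calc f (((k : ℝ) + 1) / N) * (1/N)
            = ∫ _ in Set.Ioc ((k:ℝ)/N) (((k:ℝ)+1)/N), f (((k : ℝ) + 1) / N) := by
              rw [setIntegral_const, measureReal_def, Real.volume_Ioc, smul_eq_mul,
                ENNReal.toReal_ofReal (by linarith : (0:ℝ) ≤ ((k:ℝ)+1)/N - (k:ℝ)/N),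
                ← sub_div]
              norm_num [mul_comm]
        _ ≤ ∫ t in Set.Ioc ((k:ℝ)/N) (((k:ℝ)+1)/N), f t := by
              apply setIntegral_mono_on
                (integrableOn_const (by rw [Real.volume_Ioc]; exact ENNReal.ofReal_ne_top))
                (hint.mono_set hsubset) measurableSet_Ioc hmono
      have tele : ∑ k ∈ Finset.range M, (∫ t in ((k:ℝ)/N)..(((k:ℝ)+1)/N), f t)
          = ∫ t in (0:ℝ)..((M:ℝ)/N), f t := by
        have h := intervalIntegral.sum_integral_adjacent_intervals (μ := volume) (f := f)
          (a := fun k : ℕ => (k:ℝ)/N) (n := M) (fun k hk => by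
            refine hsub _ _ (by positivity) ?_ (by push_cast; gcongr <;> linarith)
            push_cast
            exact (hmem k hk).2)
        push_cast at h
        convert h using 2 <;> norm_num
      calc (1 / (N : ℝ)) * ∑ k ∈ Finset.range M, f (((k : ℝ) + 1) / N)
          = ∑ k ∈ Finset.range M, f (((k : ℝ) + 1) / N) * (1/(N:ℝ)) := by
            rw [Finset.mul_sum]; simp [mul_comm]
      _ ≤ ∑ k ∈ Finset.range M, (∫ t in ((k:ℝ)/N)..(((k:ℝ)+1)/N), f t) := Finset.sum_le_sum step
      _ = ∫ t in (0:ℝ)..((M:ℝ)/N), f t := tele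
      _ = F ((M:ℝ)/N) := rfl
  -- squeeze
  have hlow : Tendsto (fun N : ℕ => F (((⌊c * N⌋₊ : ℝ) + 1) / N) - F (1 / N)) atTop
      (𝓝 (∫ t in (0:ℝ)..c, f t)) := by
    have t1 : Tendsto (fun N : ℕ => F (((⌊c * N⌋₊ : ℝ) + 1) / N)) atTop (𝓝 (F c)) :=
      hFc.tendsto.comp hM1
    have t0 : Tendsto F (𝓝[Set.Icc 0 d] 0) (𝓝 (F 0)) :=
      hFcont.continuousWithinAt (Set.left_mem_Icc.2 hd.le)
    have t2 : Tendsto (fun N : ℕ => F (1 / (N:ℝ))) atTop (𝓝 (F 0)) := by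
      refine t0.comp (tendsto_nhdsWithin_iff.2 ⟨h1N, ?_⟩)
      filter_upwards [h1N.eventually_lt_const hd] with N hN
      exact ⟨by positivity, hN.le⟩
    have hF0 : F 0 = 0 := intervalIntegral.integral_same
    have := t1.sub t2
    rw [hF0, sub_zero] at this
    exact this
  have hup : Tendsto (fun N : ℕ => F ((⌊c * N⌋₊ : ℝ) / N)) atTop (𝓝 (∫ t in (0:ℝ)..c, f t)) :=
    hFc.tendsto.comp hM
  exact tendsto_of_tendsto_of_tendsto_of_le_of_le' hlow hup
    (hbound.mono fun N h => h.1) (hbound.mono fun N h => h.2)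

private lemma sinDivAnti : AntitoneOn (fun t => Real.sin t / t) (Set.Ioc 0 Real.pi) := by
  have hconv : Convex ℝ (Set.Ioc (0:ℝ) Real.pi) := convex_Ioc 0 Real.pi
  apply antitoneOn_of_deriv_nonpos hconv
  · exact (Real.continuous_sin.continuousOn.div continuousOn_id
      (fun x hx => ne_of_gt hx.1))
  · intro x hx
    rw [interior_Ioc] at hx
    exact ((Real.differentiable_sin x).div differentiableAt_id
      (ne_of_gt hx.1)).differentiableWithinAt
  · intro x hx
    rw [interior_Ioc] at hx
    have hx0 : 0 < x := hx.1
    have hd : HasDerivAt (fun t => Real.sin t / t) ((Real.cos x * x - Real.sin x * 1) / x ^ 2) x :=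
      (Real.hasDerivAt_sin x).div (hasDerivAt_id x) (ne_of_gt hx0)
    rw [hd.deriv]
    apply div_nonpos_of_nonpos_of_nonneg _ (sq_nonneg x)
    have hnum : x * Real.cos x ≤ Real.sin x := by
      rcases lt_trichotomy x (Real.pi / 2) with h | h | h
      · have hcos : 0 < Real.cos x := Real.cos_pos_of_mem_Ioo ⟨by linarith [Real.pi_pos], h⟩
        have htan := Real.lt_tan hx0 h
        rw [Real.tan_eq_sin_div_cos, lt_div_iff₀ hcos] at htan
        linarith
      · rw [h, Real.cos_pi_div_two, Real.sin_pi_div_two]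
        simp
      · have hcos : Real.cos x ≤ 0 := Real.cos_nonpos_of_pi_div_two_le_of_le h.le (by linarith [hx.2, Real.pi_pos])
        have hsin : 0 < Real.sin x := Real.sin_pos_of_pos_of_lt_pi hx0 hx.2
        nlinarith
    nlinarith

noncomputable def f2 (x : ℝ) : ℝ := Real.log (2 * Real.sin (Real.pi * x)) - Real.log x

private lemma f2_eq {x : ℝ} (hx0 : 0 < x) (hx1 : x < 1) :
    f2 x = Real.log (2 * Real.pi) + Real.log (Real.sin (Real.pi * x) / (Real.pi * x)) := by
  have hpi := Real.pi_pos
  have hsin : 0 < Real.sin (Real.pi * x) :=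
    Real.sin_pos_of_pos_of_lt_pi (by positivity) (by nlinarith)
  rw [f2, Real.log_mul (by norm_num) (ne_of_gt hsin),
    Real.log_mul (by norm_num) (ne_of_gt hpi),
    Real.log_div (ne_of_gt hsin) (by positivity),
    Real.log_mul (ne_of_gt hpi) (ne_of_gt hx0)]
  ring

private lemma f2_anti {d : ℝ} (hd0 : 0 < d) (hd1 : d < 1) : AntitoneOn f2 (Set.Ioc 0 d) := by
  have hpi := Real.pi_pos
  intro a ha b hb hab
  rw [f2_eq ha.1 (lt_of_le_of_lt ha.2 hd1), f2_eq hb.1 (lt_of_le_of_lt hb.2 hd1)]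
  have hmem : ∀ y : ℝ, y ∈ Set.Ioc (0:ℝ) d → Real.pi * y ∈ Set.Ioc 0 Real.pi := by
    intro y hy
    exact ⟨mul_pos hpi hy.1, by nlinarith [hy.1, hy.2]⟩
  have h1 : Real.sin (Real.pi * b) / (Real.pi * b) ≤ Real.sin (Real.pi * a) / (Real.pi * a) :=
    sinDivAnti (hmem a ha) (hmem b hb) (by nlinarith [ha.1])
  have h2 : 0 < Real.sin (Real.pi * b) / (Real.pi * b) := by
    have hb0 : 0 < Real.pi * b := mul_pos hpi hb.1
    have : 0 < Real.sin (Real.pi * b) :=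
      Real.sin_pos_of_pos_of_lt_pi hb0 (by nlinarith [hb.1, hb.2])
    positivity
  exact add_le_add_right (Real.log_le_log h2 h1) _

private lemma f2_int {d : ℝ} (hd0 : 0 < d) (hd1 : d < 1) :
    IntegrableOn f2 (Set.Ioc 0 d) := by
  have hpi := Real.pi_pos
  have hmeas : AEStronglyMeasurable f2 (volume : Measure ℝ) := by
    apply Measurable.aestronglyMeasurable
    exact (Real.measurable_log.comp
      ((continuous_const.mul (Real.continuous_sin.comp (continuous_const.mul continuous_id))).measurable)).sub
      Real.measurable_log
  apply Measure.integrableOn_of_bounded (M := |f2 d| + |Real.log (2 * Real.pi)|)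
  · rw [Real.volume_Ioc]; exact ENNReal.ofReal_ne_top
  · exact hmeas
  · rw [ae_restrict_iff' measurableSet_Ioc]
    apply ae_of_all
    intro x hx
    have hlow : f2 d ≤ f2 x := f2_anti hd0 hd1 hx ⟨hd0, le_rfl⟩ hx.2
    have hup : f2 x ≤ Real.log (2 * Real.pi) := by
      rw [f2_eq hx.1 (lt_of_le_of_lt hx.2 hd1)]
      have hpx : 0 < Real.pi * x := mul_pos hpi hx.1
      have hu1 : Real.sin (Real.pi * x) / (Real.pi * x) ≤ 1 := by
        rw [div_le_one hpx]
        exact Real.sin_le hpx.le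
      have hu0 : 0 < Real.sin (Real.pi * x) :=
        Real.sin_pos_of_pos_of_lt_pi hpx (by nlinarith [hx.1, hx.2])
      have := Real.log_nonpos (by positivity) hu1
      linarith
    rw [Real.norm_eq_abs, abs_le]
    constructor
    · have : -|f2 d| ≤ f2 d := neg_abs_le _
      have h2 : (0:ℝ) ≤ |Real.log (2 * Real.pi)| := abs_nonneg _
      linarith
    · have : Real.log (2 * Real.pi) ≤ |Real.log (2 * Real.pi)| := le_abs_self _
      have h2 : (0:ℝ) ≤ |f2 d| := abs_nonneg _
      linarith

private lemma key_mono (f : ℝ → ℝ) (c d : ℝ) (hc : 0 < c) (hcd : c < d)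
    (hf : MonotoneOn f (Set.Ioc 0 d)) (hint : IntegrableOn f (Set.Ioc 0 d)) :
    Tendsto (fun N : ℕ => (1 / (N : ℝ)) * ∑ k ∈ Finset.range ⌊c * N⌋₊, f (((k : ℝ) + 1) / N))
      atTop (𝓝 (∫ t in (0:ℝ)..c, f t)) := by
  have h := (key_anti (fun x => -f x) c d hc hcd
      (fun a ha b hb hab => neg_le_neg (hf ha hb hab)) hint.neg).neg
  simp only [intervalIntegral.integral_neg, neg_neg, mul_neg, Finset.sum_neg_distrib] at h
  exact h

open Filter in
theorem stmt_14 (c : ℝ) (hc0 : 0 < c) (hc1 : c < 1) :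
    Tendsto
      (fun N : ℕ =>
        (1 / (N : ℝ)) *
          ∑ k ∈ Finset.range ⌊c * N⌋₊, Real.log (2 * Real.sin ((k + 1) * Real.pi / N)))
      atTop
      (nhds ((1 / Real.pi) * ∫ t in (0 : ℝ)..(c * Real.pi), Real.log (2 * Real.sin t))) := by
  have hpi := Real.pi_pos
  set d : ℝ := (1 + c) / 2 with hd
  have hcd : c < d := by rw [hd]; linarith
  have hd1 : d < 1 := by rw [hd]; linarith
  have hd0 : 0 < d := hc0.trans hcd
  have hlogmono : MonotoneOn Real.log (Set.Ioc 0 d) :=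
    fun a ha b hb hab => Real.log_le_log ha.1 hab
  have hlogint : IntegrableOn Real.log (Set.Ioc 0 d) :=
    integrableOn_log01.mono_set (Set.Ioc_subset_Ioc le_rfl hd1.le)
  have T1 := key_mono Real.log c d hc0 hcd hlogmono hlogint
  have T2 := key_anti f2 c d hc0 hcd (f2_anti hd0 hd1) (f2_int hd0 hd1)
  have T := T1.add T2
  have hfun : (fun N : ℕ => (1 / (N : ℝ)) * ∑ k ∈ Finset.range ⌊c * N⌋₊,
        Real.log (2 * Real.sin ((k + 1) * Real.pi / N)))
      = fun N : ℕ =>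
        (1 / (N : ℝ)) * ∑ k ∈ Finset.range ⌊c * N⌋₊, Real.log (((k:ℝ) + 1) / N)
          + (1 / (N : ℝ)) * ∑ k ∈ Finset.range ⌊c * N⌋₊, f2 (((k:ℝ) + 1) / N) := by
    funext N
    rw [← mul_add, ← Finset.sum_add_distrib]
    congr 1
    apply Finset.sum_congr rfl
    intro k _
    have harg : ((k:ℝ) + 1) * Real.pi / N = Real.pi * (((k:ℝ) + 1) / N) := by ring
    rw [harg, f2]
    ring
  have hptw : ∀ x : ℝ, Real.log x + f2 x = Real.log (2 * Real.sin (Real.pi * x)) := by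
    intro x; rw [f2]; ring
  have hint1 : IntervalIntegrable Real.log volume 0 c := by
    rw [intervalIntegrable_iff_integrableOn_Ioc_of_le hc0.le]
    exact hlogint.mono_set (Set.Ioc_subset_Ioc le_rfl hcd.le)
  have hint2 : IntervalIntegrable f2 volume 0 c := by
    rw [intervalIntegrable_iff_integrableOn_Ioc_of_le hc0.le]
    exact (f2_int hd0 hd1).mono_set (Set.Ioc_subset_Ioc le_rfl hcd.le)
  have hval : (1 / Real.pi) * ∫ t in (0:ℝ)..(c * Real.pi), Real.log (2 * Real.sin t)
      = (∫ t in (0:ℝ)..c, Real.log t) + ∫ t in (0:ℝ)..c, f2 t := by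
    have h1 := intervalIntegral.integral_comp_mul_left (a := (0:ℝ)) (b := c)
      (fun t => Real.log (2 * Real.sin t)) (ne_of_gt hpi)
    calc (1 / Real.pi) * ∫ t in (0:ℝ)..(c * Real.pi), Real.log (2 * Real.sin t)
        = Real.pi⁻¹ • ∫ t in (Real.pi * 0)..(Real.pi * c), Real.log (2 * Real.sin t) := by
          rw [smul_eq_mul, one_div, mul_zero, mul_comm Real.pi c]
    _ = ∫ x in (0:ℝ)..c, Real.log (2 * Real.sin (Real.pi * x)) := h1.symm
    _ = ∫ x in (0:ℝ)..c, (Real.log x + f2 x) := by simp_rw [hptw]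
    _ = (∫ t in (0:ℝ)..c, Real.log t) + ∫ t in (0:ℝ)..c, f2 t :=
          intervalIntegral.integral_add hint1 hint2
  rw [hfun, hval]
  exact T
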